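/- Let μ̄ and μ be ordinals and let f be a strictly increasing function from the ordinals < μ̄ to the ordinals < μ which is cofinal (sup{f(ȳ) : ȳ < μ̄} = μ) and satisfies f(0) = 0. Let Λ̄ ⊆ μ̄ and Λ ⊆ μ be sets of ordinals such that: (i) for every ȳ < μ̄, ȳ ∈ Λ̄ if and only if f(ȳ) ∈ Λ; (ii) for all z̄ < ȳ < μ̄, there exists x̄ ∈ Λ̄ with z̄ < x̄ < ȳ if and only if there exists x ∈ Λ with f(z̄) < x < f(ȳ). Assume moreover that Λ̄ is closed in μ̄. Then Λ̄ has a maximum element if and only if Λ has a maximum element, and in that case f(max Λ̄) = max Λ. -/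

import Mathlib

/-- `l` is a limit point of the set `A` of ordinals: `l > 0` and `sup (A ∩ l) = l`. -/
def IsLimitPt (A : Set Ordinal) (l : Ordinal) : Prop :=
  0 < l ∧ sSup (A ∩ Set.Iio l) = l

/-- `A` is closed in the ordinal `ν`: every limit point of `A` below `ν` belongs to `A`. -/
def IsClosedIn (A : Set Ordinal) (ν : Ordinal) : Prop :=
  ∀ l < ν, IsLimitPt A l → l ∈ A

theorem stmt3 (μb μ : Ordinal) (f : Ordinal → Ordinal)
    (hmono : ∀ x y, x < y → y < μb → f x < f y)
    (hinto : ∀ x < μb, f x < μ)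
    (hcof : sSup (f '' Set.Iio μb) = μ)
    (hf0 : f 0 = 0)
    (Λb Λ : Set Ordinal)
    (hΛb : Λb ⊆ Set.Iio μb) (hΛ : Λ ⊆ Set.Iio μ)
    (hi : ∀ y < μb, (y ∈ Λb ↔ f y ∈ Λ))
    (hii : ∀ z y, z < y → y < μb →
      ((∃ x ∈ Λb, z < x ∧ x < y) ↔ (∃ x ∈ Λ, f z < x ∧ x < f y)))
    (hclosed : IsClosedIn Λb μb) :
    ((∃ m, IsGreatest Λb m) ↔ (∃ m, IsGreatest Λ m)) ∧
      ∀ m m', IsGreatest Λb m → IsGreatest Λ m' → f m = m' := by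
  have key : ∀ m, IsGreatest Λb m → IsGreatest Λ (f m) := by
    intro m hm
    have hmμb : m < μb := hΛb hm.1
    refine ⟨(hi m hmμb).1 hm.1, fun x hx => ?_⟩
    by_contra hlt
    push_neg at hlt
    have hxμ : x < μ := hΛ hx
    have hne : (f '' Set.Iio μb).Nonempty := ⟨f m, ⟨m, hmμb, rfl⟩⟩
    obtain ⟨w, ⟨y, hyμb, rfl⟩, hxw⟩ := exists_lt_of_lt_csSup hne (hcof ▸ hxμ)
    have hmy : m < y := by
      by_contra h
      push_neg at h
      have hle : f y ≤ f m := by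
        rcases eq_or_lt_of_le h with rfl | h'
        · exact le_rfl
        · exact (hmono y m h' hmμb).le
      exact absurd (hlt.trans hxw) (not_lt.2 hle)
    obtain ⟨xb, hxb, hmxb, _⟩ := (hii m y hmy hyμb).2 ⟨x, hx, hlt, hxw⟩
    exact absurd (hm.2 hxb) (not_le.2 hmxb)
  refine ⟨⟨fun ⟨m, hm⟩ => ⟨f m, key m hm⟩, ?_⟩,
    fun m m' hm hm' => (key m hm).unique hm'⟩
  rintro ⟨m', hm'⟩
  have hm'μ : m' < μ := hΛ hm'.1
  have hμbpos : 0 < μb := by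
    rcases eq_zero_or_pos μb with h | h
    · exfalso
      have he : f '' Set.Iio μb = ∅ := by
        rw [h]; ext x; simp [not_lt_zero]
      rw [he, csSup_empty] at hcof
      rw [← hcof] at hm'μ
      exact absurd hm'μ (not_lt.2 bot_le)
    · exact h
  have hbdd : BddAbove Λb := ⟨μb, fun x hx => (hΛb hx).le⟩
  -- Λb is nonempty
  have hΛbne : Λb.Nonempty := by
    rcases eq_or_lt_of_le (zero_le : 0 ≤ m') with h0 | hpos
    · exact ⟨0, (hi 0 hμbpos).2 (by rw [hf0, h0]; exact hm'.1)⟩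
    · have hne : (f '' Set.Iio μb).Nonempty := ⟨f 0, ⟨0, hμbpos, rfl⟩⟩
      obtain ⟨w, ⟨y, hyμb, rfl⟩, hm'w⟩ := exists_lt_of_lt_csSup hne (hcof ▸ hm'μ)
      have h0y : (0 : Ordinal) < y := by
        rcases eq_or_lt_of_le (zero_le : (0 : Ordinal) ≤ y) with h | h
        · exfalso; rw [← h, hf0] at hm'w
          exact absurd (hpos.trans hm'w) (lt_irrefl _)
        · exact h
      obtain ⟨xb, hxb, _⟩ := (hii 0 y h0y hyμb).2
        ⟨m', hm'.1, by rw [hf0]; exact hpos, hm'w⟩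
      exact ⟨xb, hxb⟩
  have hsle : sSup Λb ≤ μb := csSup_le hΛbne fun x hx => (hΛb hx).le
  have hsne : sSup Λb ≠ μb := by
    intro heq
    have hne : (f '' Set.Iio μb).Nonempty := ⟨f 0, ⟨0, hμbpos, rfl⟩⟩
    obtain ⟨w, ⟨y, hyμb, rfl⟩, hm'w⟩ := exists_lt_of_lt_csSup hne (hcof ▸ hm'μ)
    obtain ⟨yb, hyb, hyyb⟩ := exists_lt_of_lt_csSup hΛbne (heq ▸ hyμb : y < sSup Λb)
    have : f y < f yb := hmono y yb hyyb (hΛb hyb)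
    have hfyb : f yb ∈ Λ := (hi yb (hΛb hyb)).1 hyb
    exact absurd (hm'.2 hfyb) (not_le.2 (hm'w.trans this))
  have hsμb : sSup Λb < μb := lt_of_le_of_ne hsle hsne
  have hsmem : sSup Λb ∈ Λb := by
    by_contra hnot
    have hspos : 0 < sSup Λb := by
      obtain ⟨a, ha⟩ := hΛbne
      rcases eq_or_lt_of_le (zero_le : 0 ≤ sSup Λb) with h | h
      · exfalso
        have h1 : a ≤ sSup Λb := le_csSup hbdd ha
        rw [← h] at h1
        have h2 : a = 0 := le_antisymm h1 zero_le
        rw [h2, h] at ha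
        exact hnot ha
      · exact h
    have hinter : Λb ∩ Set.Iio (sSup Λb) = Λb := by
      ext a
      refine ⟨fun h => h.1, fun h => ⟨h, lt_of_le_of_ne (le_csSup hbdd h) ?_⟩⟩
      intro heq; rw [← heq] at hnot; exact hnot h
    exact hnot (hclosed (sSup Λb) hsμb ⟨hspos, by rw [hinter]⟩)
  exact ⟨sSup Λb, hsmem, fun x hx => le_csSup hbdd hx⟩
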